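/- Let B_0, B_1, B_2 be Hausdorff topological spaces and let f_1 : B_0 → B_1 and f_2 : B_0 → B_2 be continuous maps. Then the double mapping cylinder B_1 ∪_{f_1} (B_0 × [0,1]) ∪_{f_2} B_2 is a Hausdorff topological space. -/

import Mathlib

open TopologicalSpace unitInterval

/-- The identifications defining the double mapping cylinder of `f₁ : B₀ → B₁`, `f₂ : B₀ → B₂`:
`f₁ b ~ (b, 0)` and `f₂ b ~ (b, 1)`. -/
def dmcRel {B₀ B₁ B₂ : Type} (f₁ : B₀ → B₁) (f₂ : B₀ → B₂) :
    (B₁ ⊕ ((B₀ × I) ⊕ B₂)) → (B₁ ⊕ ((B₀ × I) ⊕ B₂)) → Prop :=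
  fun x y =>
    (∃ b : B₀, x = Sum.inl (f₁ b) ∧ y = Sum.inr (Sum.inl (b, 0))) ∨
    (∃ b : B₀, x = Sum.inr (Sum.inr (f₂ b)) ∧ y = Sum.inr (Sum.inl (b, 1)))

/-- The double mapping cylinder `B₁ ∪_{f₁} (B₀ × [0,1]) ∪_{f₂} B₂`, with the quotient topology. -/
abbrev DMC {B₀ B₁ B₂ : Type} [TopologicalSpace B₀] [TopologicalSpace B₁] [TopologicalSpace B₂]
    (f₁ : B₀ → B₁) (f₂ : B₀ → B₂) : Type :=
  Quot (dmcRel f₁ f₂)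

/-- The quotient map onto the double mapping cylinder. -/
abbrev dmcMk {B₀ B₁ B₂ : Type} [TopologicalSpace B₀] [TopologicalSpace B₁] [TopologicalSpace B₂]
    (f₁ : B₀ → B₁) (f₂ : B₀ → B₂) : (B₁ ⊕ ((B₀ × I) ⊕ B₂)) → DMC f₁ f₂ :=
  Quot.mk (dmcRel f₁ f₂)

section DMCaux

def dmcR {B₀ B₁ B₂ : Type} (f₁ : B₀ → B₁) (f₂ : B₀ → B₂) :
    (B₁ ⊕ ((B₀ × I) ⊕ B₂)) → (B₁ ⊕ ((B₀ × I) ⊕ B₂)) → Prop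
  | Sum.inl y, Sum.inl y' => y = y'
  | Sum.inl y, Sum.inr (Sum.inl p) => p.2 = 0 ∧ f₁ p.1 = y
  | Sum.inl _, Sum.inr (Sum.inr _) => False
  | Sum.inr (Sum.inl p), Sum.inl y => p.2 = 0 ∧ f₁ p.1 = y
  | Sum.inr (Sum.inl p), Sum.inr (Sum.inl q) =>
      p = q ∨ (p.2 = 0 ∧ q.2 = 0 ∧ f₁ p.1 = f₁ q.1) ∨ (p.2 = 1 ∧ q.2 = 1 ∧ f₂ p.1 = f₂ q.1)
  | Sum.inr (Sum.inl p), Sum.inr (Sum.inr z) => p.2 = 1 ∧ f₂ p.1 = z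
  | Sum.inr (Sum.inr _), Sum.inl _ => False
  | Sum.inr (Sum.inr z), Sum.inr (Sum.inl p) => p.2 = 1 ∧ f₂ p.1 = z
  | Sum.inr (Sum.inr z), Sum.inr (Sum.inr z') => z = z'

variable {B₀ B₁ B₂ : Type} {f₁ : B₀ → B₁} {f₂ : B₀ → B₂}

lemma I_zero_ne_one : (0 : I) ≠ 1 := by
  intro h; have := congrArg Subtype.val h; norm_num at this

lemma dmcR_refl (x) : dmcR f₁ f₂ x x := by
  rcases x with y | p | z <;> simp [dmcR]

lemma dmcR_symm {x y} (h : dmcR f₁ f₂ x y) : dmcR f₁ f₂ y x := by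
  rcases x with y₁ | p₁ | z₁ <;> rcases y with y₂ | p₂ | z₂ <;>
    simp [dmcR] at h ⊢ <;> tauto

lemma dmcR_trans {x y z} (h : dmcR f₁ f₂ x y) (h' : dmcR f₁ f₂ y z) : dmcR f₁ f₂ x z := by
  have h01 := @I_zero_ne_one
  rcases x with y₁ | p₁ | z₁ <;> rcases y with y₂ | p₂ | z₂ <;> rcases z with y₃ | p₃ | z₃ <;>
    simp only [dmcR] at h h' ⊢ <;>
    first
      | tauto
      | (rcases h with rfl | ⟨h1,h2,h3⟩ | ⟨h1,h2,h3⟩ <;>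
         rcases h' with rfl | ⟨h1',h2',h3'⟩ | ⟨h1',h2',h3'⟩ <;>
         simp_all <;> tauto)
      | (rcases h with ⟨h1,h2⟩ <;>
         rcases h' with rfl | ⟨h1',h2',h3'⟩ | ⟨h1',h2',h3'⟩ <;> simp_all)
      | (rcases h' with ⟨h1,h2⟩ <;>
         rcases h with rfl | ⟨h1',h2',h3'⟩ | ⟨h1',h2',h3'⟩ <;> simp_all)
      | (obtain ⟨h1,h2⟩ := h; obtain ⟨h1',h2'⟩ := h'; simp_all)

abbrev DMC' (f₁ : B₀ → B₁) (f₂ : B₀ → B₂) := Quot (dmcRel f₁ f₂)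
variable [TopologicalSpace B₀] [TopologicalSpace B₁] [TopologicalSpace B₂]

lemma dmcRel_le_dmcR {x y} (h : dmcRel f₁ f₂ x y) : dmcR f₁ f₂ x y := by
  rcases h with ⟨b, rfl, rfl⟩ | ⟨b, rfl, rfl⟩ <;> simp [dmcR]

lemma mk_imp {x y} (h : Quot.mk (dmcRel f₁ f₂) x = Quot.mk (dmcRel f₁ f₂) y) :
    dmcR f₁ f₂ x y := by
  rw [Quot.eq] at h
  induction h with
  | rel _ _ h => exact dmcRel_le_dmcR h
  | refl => exact dmcR_refl _
  | symm _ _ _ ih => exact dmcR_symm ih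
  | trans _ _ _ _ _ ih₁ ih₂ => exact dmcR_trans ih₁ ih₂

/-- the time coordinate -/
noncomputable def dmcT (f₁ : B₀ → B₁) (f₂ : B₀ → B₂) : Quot (dmcRel f₁ f₂) → ℝ :=
  Quot.lift (Sum.elim (fun _ => (0:ℝ)) (Sum.elim (fun p => (p.2 : ℝ)) (fun _ => 1)))
    (by rintro x y (⟨b, rfl, rfl⟩ | ⟨b, rfl, rfl⟩) <;> simp)

lemma continuous_dmcT : Continuous (dmcT f₁ f₂) := by
  rw [isQuotientMap_quot_mk.continuous_iff]
  exact (continuous_const.sumElim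
    ((continuous_subtype_val.comp continuous_snd).sumElim continuous_const))

lemma dmcT_mem (p : Quot (dmcRel f₁ f₂)) : dmcT f₁ f₂ p ∈ Set.Icc (0:ℝ) 1 := by
  induction p using Quot.ind with
  | _ x =>
    rcases x with y | ⟨b, s⟩ | z
    · exact ⟨le_rfl, zero_le_one⟩
    · exact ⟨s.2.1, s.2.2⟩
    · exact ⟨zero_le_one, le_rfl⟩

lemma key {A : Set (B₁ ⊕ ((B₀ × I) ⊕ B₂))}
    (hsat : ∀ x y, dmcR f₁ f₂ x y → y ∈ A → x ∈ A) :
    Quot.mk (dmcRel f₁ f₂) ⁻¹' (Quot.mk (dmcRel f₁ f₂) '' A) = A := by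
  ext x
  constructor
  · rintro ⟨a, ha, h⟩
    exact hsat x a (dmcR_symm (mk_imp h)) ha
  · exact fun h => ⟨x, h, rfl⟩

lemma key_open {A : Set (B₁ ⊕ ((B₀ × I) ⊕ B₂))} (hA : IsOpen A)
    (hsat : ∀ x y, dmcR f₁ f₂ x y → y ∈ A → x ∈ A) :
    IsOpen (Quot.mk (dmcRel f₁ f₂) '' A) := by
  rw [← isQuotientMap_quot_mk.isOpen_preimage, key hsat]; exact hA

lemma key_disj {A B : Set (B₁ ⊕ ((B₀ × I) ⊕ B₂))} (hAB : A ∩ B = ∅)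
    (hsatB : ∀ x y, dmcR f₁ f₂ x y → y ∈ B → x ∈ B) :
    Disjoint (Quot.mk (dmcRel f₁ f₂) '' A) (Quot.mk (dmcRel f₁ f₂) '' B) := by
  rw [Set.disjoint_left]
  rintro r ⟨x, hx, rfl⟩ hrB
  have : x ∈ Quot.mk (dmcRel f₁ f₂) ⁻¹' (Quot.mk (dmcRel f₁ f₂) '' B) := hrB
  rw [key hsatB] at this
  have : x ∈ A ∩ B := ⟨hx, this⟩
  rw [hAB] at this
  exact this

def A1 (f₁ : B₀ → B₁) (U : Set B₁) : Set (B₁ ⊕ ((B₀ × I) ⊕ B₂)) :=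
  Sum.elim (· ∈ U) (Sum.elim (fun p => f₁ p.1 ∈ U ∧ (p.2 : ℝ) < 1) (fun _ => False))

def A2 (f₂ : B₀ → B₂) (V : Set B₂) : Set (B₁ ⊕ ((B₀ × I) ⊕ B₂)) :=
  Sum.elim (fun _ => False) (Sum.elim (fun p => f₂ p.1 ∈ V ∧ 0 < (p.2 : ℝ)) (· ∈ V))

def A0 (W : Set (B₀ × I)) : Set (B₁ ⊕ ((B₀ × I) ⊕ B₂)) :=
  Sum.elim (fun _ => False) (Sum.elim (· ∈ W) (fun _ => False))

lemma isOpen_A1 {U : Set B₁} (hf₁ : Continuous f₁) (hU : IsOpen U) :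
    IsOpen (A1 (B₂ := B₂) f₁ U) := by
  rw [isOpen_sum_iff]
  constructor
  · exact hU
  · rw [isOpen_sum_iff]
    refine ⟨IsOpen.inter ?_ ?_, isOpen_empty⟩
    · exact (hf₁.comp continuous_fst).isOpen_preimage U hU
    · exact isOpen_Iio.preimage (continuous_subtype_val.comp continuous_snd)

lemma isOpen_A2 {V : Set B₂} (hf₂ : Continuous f₂) (hV : IsOpen V) :
    IsOpen (A2 (B₁ := B₁) f₂ V) := by
  rw [isOpen_sum_iff]
  refine ⟨isOpen_empty, ?_⟩
  rw [isOpen_sum_iff]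
  refine ⟨IsOpen.inter ?_ ?_, hV⟩
  · exact (hf₂.comp continuous_fst).isOpen_preimage V hV
  · exact isOpen_Ioi.preimage (continuous_subtype_val.comp continuous_snd)

lemma isOpen_A0 {W : Set (B₀ × I)} (hW : IsOpen W) :
    IsOpen (A0 (B₁ := B₁) (B₂ := B₂) W) := by
  rw [isOpen_sum_iff]
  exact ⟨isOpen_empty, by rw [isOpen_sum_iff]; exact ⟨hW, isOpen_empty⟩⟩

lemma coe_eq_zero {s : I} (h : (s : ℝ) = 0) : s = 0 := Subtype.ext h
lemma coe_eq_one {s : I} (h : (s : ℝ) = 1) : s = 1 := Subtype.ext h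

lemma sat_A1 {U : Set B₁} :
    ∀ x y, dmcR f₁ f₂ x y → y ∈ A1 (B₂ := B₂) f₁ U → x ∈ A1 (B₂ := B₂) f₁ U := by
  rintro (y₁ | ⟨b, s⟩ | z₁) (y₂ | ⟨b', s'⟩ | z₂) h hy <;>
    simp only [dmcR, A1, Sum.elim_inl, Sum.elim_inr, Membership.mem, Set.Mem] at h hy ⊢
  · exact h ▸ hy
  · obtain ⟨hs, hf⟩ := h; exact hf ▸ hy.1
  · obtain ⟨hs, hf⟩ := h
    refine ⟨hf ▸ hy, ?_⟩
    rw [hs]; norm_num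
  · rcases h with h | ⟨h1, h2, h3⟩ | ⟨h1, h2, h3⟩
    · obtain ⟨rfl, rfl⟩ := Prod.mk.injEq .. ▸ h; exact hy
    · refine ⟨h3 ▸ hy.1, ?_⟩; rw [h1]; norm_num
    · exfalso; rw [h2] at hy; exact absurd hy.2 (by norm_num)
  · obtain ⟨h1, h2⟩ := h
    exfalso; rw [h1] at hy; exact absurd hy.2 (by norm_num)

lemma sat_A2 {V : Set B₂} :
    ∀ x y, dmcR f₁ f₂ x y → y ∈ A2 (B₁ := B₁) f₂ V → x ∈ A2 (B₁ := B₁) f₂ V := by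
  rintro (y₁ | ⟨b, s⟩ | z₁) (y₂ | ⟨b', s'⟩ | z₂) h hy <;>
    simp only [dmcR, A2, Sum.elim_inl, Sum.elim_inr, Membership.mem, Set.Mem] at h hy ⊢
  · obtain ⟨h1, h2⟩ := h
    exfalso; rw [h1] at hy; exact absurd hy.2 (by norm_num)
  · rcases h with h | ⟨h1, h2, h3⟩ | ⟨h1, h2, h3⟩
    · obtain ⟨rfl, rfl⟩ := Prod.mk.injEq .. ▸ h; exact hy
    · exfalso; rw [h2] at hy; exact absurd hy.2 (by norm_num)
    · refine ⟨h3 ▸ hy.1, ?_⟩; rw [h1]; norm_num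
  · obtain ⟨h1, h2⟩ := h
    refine ⟨h2 ▸ hy, ?_⟩; rw [h1]; norm_num
  · obtain ⟨h1, h2⟩ := h; exact h2 ▸ hy.1
  · exact h ▸ hy

lemma sat_A0 {W : Set (B₀ × I)} (hW : ∀ p ∈ W, 0 < (p.2 : ℝ) ∧ (p.2 : ℝ) < 1) :
    ∀ x y, dmcR f₁ f₂ x y → y ∈ A0 (B₁ := B₁) (B₂ := B₂) W →
      x ∈ A0 (B₁ := B₁) (B₂ := B₂) W := by
  rintro (y₁ | ⟨b, s⟩ | z₁) (y₂ | ⟨b', s'⟩ | z₂) h hy <;>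
    simp only [dmcR, A0, Sum.elim_inl, Sum.elim_inr, Membership.mem, Set.Mem] at h hy ⊢
  · obtain ⟨h1, h2⟩ := h
    exact absurd (h1 ▸ (hW _ hy).1) (by norm_num)
  · rcases h with h | ⟨h1, h2, h3⟩ | ⟨h1, h2, h3⟩
    · obtain ⟨rfl, rfl⟩ := Prod.mk.injEq .. ▸ h; exact hy
    · exact absurd (h2 ▸ (hW _ hy).1) (by norm_num)
    · exact absurd (h2 ▸ (hW _ hy).2) (by norm_num)
  · obtain ⟨h1, h2⟩ := h
    exact absurd (h1 ▸ (hW _ hy).2) (by norm_num)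

lemma rep_zero {p : Quot (dmcRel f₁ f₂)} (h : dmcT f₁ f₂ p = 0) :
    ∃ y, p = Quot.mk (dmcRel f₁ f₂) (Sum.inl y) := by
  induction p using Quot.ind with
  | _ x =>
    rcases x with y | ⟨b, s⟩ | z
    · exact ⟨y, rfl⟩
    · have hs : s = 0 := coe_eq_zero h
      subst hs
      exact ⟨f₁ b, (Quot.sound (show dmcRel f₁ f₂ (Sum.inl (f₁ b)) (Sum.inr (Sum.inl (b, 0))) from Or.inl ⟨b, rfl, rfl⟩)).symm⟩
    · exact absurd h one_ne_zero

lemma rep_one {p : Quot (dmcRel f₁ f₂)} (h : dmcT f₁ f₂ p = 1) :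
    ∃ z, p = Quot.mk (dmcRel f₁ f₂) (Sum.inr (Sum.inr z)) := by
  induction p using Quot.ind with
  | _ x =>
    rcases x with y | ⟨b, s⟩ | z
    · exact absurd h zero_ne_one
    · have hs : s = 1 := coe_eq_one h
      subst hs
      exact ⟨f₂ b, (Quot.sound (show dmcRel f₁ f₂ (Sum.inr (Sum.inr (f₂ b))) (Sum.inr (Sum.inl (b, 1))) from Or.inr ⟨b, rfl, rfl⟩)).symm⟩
    · exact ⟨z, rfl⟩

lemma rep_mid {p : Quot (dmcRel f₁ f₂)} (h0 : 0 < dmcT f₁ f₂ p) (h1 : dmcT f₁ f₂ p < 1) :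
    ∃ q : B₀ × I, p = Quot.mk (dmcRel f₁ f₂) (Sum.inr (Sum.inl q)) ∧
      (q.2 : ℝ) = dmcT f₁ f₂ p := by
  induction p using Quot.ind with
  | _ x =>
    rcases x with y | ⟨b, s⟩ | z
    · exact absurd h0 (lt_irrefl 0)
    · exact ⟨(b, s), rfl, rfl⟩
    · exact absurd h1 (lt_irrefl 1)

theorem dmc_t2' [T2Space B₀] [T2Space B₁] [T2Space B₂]
    (hf₁ : Continuous f₁) (hf₂ : Continuous f₂) : T2Space (Quot (dmcRel f₁ f₂)) := by
  constructor
  intro p q hpq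
  by_cases hT : dmcT f₁ f₂ p = dmcT f₁ f₂ q
  · -- same time coordinate
    rcases eq_or_ne (dmcT f₁ f₂ p) 0 with h0 | h0
    · -- both on B₁
      obtain ⟨y₁, rfl⟩ := rep_zero h0
      obtain ⟨y₂, rfl⟩ := rep_zero (hT ▸ h0)
      have hy : y₁ ≠ y₂ := by
        rintro rfl; exact hpq rfl
      obtain ⟨U, V, hU, hV, hy₁, hy₂, hUV⟩ := t2_separation hy
      refine ⟨Quot.mk _ '' A1 f₁ U, Quot.mk _ '' A1 f₁ V,
        key_open (isOpen_A1 hf₁ hU) sat_A1, key_open (isOpen_A1 hf₁ hV) sat_A1,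
        ⟨Sum.inl y₁, hy₁, rfl⟩, ⟨Sum.inl y₂, hy₂, rfl⟩, key_disj ?_ sat_A1⟩
      ext x
      simp only [Set.mem_inter_iff, Set.mem_empty_iff_false, iff_false]
      rintro ⟨h1, h2⟩
      rcases x with y | ⟨b, s⟩ | z
      · exact Set.disjoint_left.mp hUV h1 h2
      · exact Set.disjoint_left.mp hUV h1.1 h2.1
      · exact h1
    rcases eq_or_ne (dmcT f₁ f₂ p) 1 with h1 | h1
    · -- both on B₂
      obtain ⟨z₁, rfl⟩ := rep_one h1
      obtain ⟨z₂, rfl⟩ := rep_one (hT ▸ h1)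
      have hz : z₁ ≠ z₂ := by rintro rfl; exact hpq rfl
      obtain ⟨U, V, hU, hV, hz₁, hz₂, hUV⟩ := t2_separation hz
      refine ⟨Quot.mk _ '' A2 f₂ U, Quot.mk _ '' A2 f₂ V,
        key_open (isOpen_A2 hf₂ hU) sat_A2, key_open (isOpen_A2 hf₂ hV) sat_A2,
        ⟨Sum.inr (Sum.inr z₁), hz₁, rfl⟩, ⟨Sum.inr (Sum.inr z₂), hz₂, rfl⟩,
        key_disj ?_ sat_A2⟩
      ext x
      simp only [Set.mem_inter_iff, Set.mem_empty_iff_false, iff_false]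
      rintro ⟨h1, h2⟩
      rcases x with y | ⟨b, s⟩ | z
      · exact h1
      · exact Set.disjoint_left.mp hUV h1.1 h2.1
      · exact Set.disjoint_left.mp hUV h1 h2
    · -- both in the middle
      have hmem := dmcT_mem p
      have hp0 : 0 < dmcT f₁ f₂ p := lt_of_le_of_ne hmem.1 (Ne.symm h0)
      have hp1 : dmcT f₁ f₂ p < 1 := lt_of_le_of_ne hmem.2 h1
      obtain ⟨q₁, rfl, hq₁⟩ := rep_mid hp0 hp1
      obtain ⟨q₂, rfl, hq₂⟩ := rep_mid (hT ▸ hp0) (hT ▸ hp1)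
      have hne : q₁ ≠ q₂ := by rintro rfl; exact hpq rfl
      obtain ⟨U, V, hU, hV, hq₁U, hq₂V, hUV⟩ := t2_separation hne
      set M : Set (B₀ × I) := {p | 0 < (p.2 : ℝ) ∧ (p.2 : ℝ) < 1} with hM
      have hMopen : IsOpen M := by
        have : M = (fun p : B₀ × I => (p.2 : ℝ)) ⁻¹' (Set.Ioo 0 1) := rfl
        rw [this]
        exact isOpen_Ioo.preimage (continuous_subtype_val.comp continuous_snd)
      have hWm : ∀ (W : Set (B₀ × I)), ∀ p ∈ W ∩ M, 0 < (p.2 : ℝ) ∧ (p.2 : ℝ) < 1 :=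
        fun W p hp => hp.2
      refine ⟨Quot.mk _ '' A0 (U ∩ M), Quot.mk _ '' A0 (V ∩ M),
        key_open (isOpen_A0 (hU.inter hMopen)) (sat_A0 (hWm U)),
        key_open (isOpen_A0 (hV.inter hMopen)) (sat_A0 (hWm V)),
        ⟨Sum.inr (Sum.inl q₁), ⟨hq₁U, hq₁ ▸ hp0, hq₁ ▸ hp1⟩, rfl⟩,
        ⟨Sum.inr (Sum.inl q₂), ⟨hq₂V, hq₂ ▸ hT ▸ hp0, hq₂ ▸ hT ▸ hp1⟩, rfl⟩,
        key_disj ?_ (sat_A0 (hWm V))⟩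
      ext x
      simp only [Set.mem_inter_iff, Set.mem_empty_iff_false, iff_false]
      rintro ⟨h1, h2⟩
      rcases x with y | ⟨b, s⟩ | z
      · exact h1
      · exact Set.disjoint_left.mp hUV h1.1 h2.1
      · exact h1
  · -- different time coordinates: separate via dmcT
    obtain ⟨u, v, hu, hv, hpu, hqv, huv⟩ := t2_separation hT
    exact ⟨dmcT f₁ f₂ ⁻¹' u, dmcT f₁ f₂ ⁻¹' v, hu.preimage continuous_dmcT,
      hv.preimage continuous_dmcT, hpu, hqv, huv.preimage _⟩


end DMCaux

/-- The double mapping cylinder of continuous maps between Hausdorff spaces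
is Hausdorff. -/
theorem dmc_t2 {B₀ B₁ B₂ : Type} [TopologicalSpace B₀] [TopologicalSpace B₁] [TopologicalSpace B₂]
    [T2Space B₀] [T2Space B₁] [T2Space B₂] (f₁ : C(B₀, B₁)) (f₂ : C(B₀, B₂)) :
    T2Space (DMC ⇑f₁ ⇑f₂) :=
  dmc_t2' f₁.continuous f₂.continuous
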